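/- arXiv:2202.06553 — 6 statements merged into one kernel-verified Lean document; each statement's English description precedes it below -/
import Mathlib

section
/- If φ is an analytic self-map of the unit disk and the composition operator C_φ f = f∘φ is an isometry of the harmonic Bloch norm |||·|||_{HB(1)} on the harmonic Bloch space, then φ(0) = 0. -/
open Complex Metric Set Filter
noncomputable section
namespace SPick

def mob (a z : ℂ) : ℂ := (a - z) / (1 - (starRingEnd ℂ) a * z)

lemma denom_ne {a z : ℂ} (ha : ‖a‖ < 1) (hz : ‖z‖ < 1) :
    1 - (starRingEnd ℂ) a * z ≠ 0 := by
  intro h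
  have h1 : (starRingEnd ℂ) a * z = 1 := by linear_combination -h
  have h2 : ‖(starRingEnd ℂ) a * z‖ < 1 := by
    rw [norm_mul, Complex.norm_conj]
    nlinarith [norm_nonneg a, norm_nonneg z]
  rw [h1] at h2; simp at h2

lemma key_id (a z : ℂ) :
    Complex.normSq (1 - (starRingEnd ℂ) a * z) =
      (1 - Complex.normSq a) * (1 - Complex.normSq z) + Complex.normSq (a - z) := by
  simp only [Complex.normSq_apply, Complex.sub_re, Complex.sub_im, Complex.mul_re, Complex.mul_im,
    Complex.one_re, Complex.one_im, Complex.conj_re, Complex.conj_im]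
  ring

lemma key_ineq (a z : ℂ) :
    (1 - ‖a‖ ^ 2) * (1 - ‖z‖ ^ 2) ≤ ‖1 - (starRingEnd ℂ) a * z‖ ^ 2 := by
  rw [Complex.sq_norm, Complex.sq_norm, Complex.sq_norm, key_id]
  nlinarith [Complex.normSq_nonneg (a - z)]

lemma mob_lt {a z : ℂ} (ha : ‖a‖ < 1) (hz : ‖z‖ < 1) :
    ‖mob a z‖ < 1 := by
  rw [mob, norm_div, div_lt_one (norm_pos_iff.mpr (denom_ne ha hz))]
  rw [Complex.norm_def, Complex.norm_def]
  apply Real.sqrt_lt_sqrt (Complex.normSq_nonneg _)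
  have := key_id a z
  have h1 : Complex.normSq a < 1 := by
    rw [← Complex.sq_norm]; nlinarith [norm_nonneg a]
  have h2 : Complex.normSq z < 1 := by
    rw [← Complex.sq_norm]; nlinarith [norm_nonneg z]
  nlinarith

lemma mob_hasDeriv (a : ℂ) {z : ℂ} (h : 1 - (starRingEnd ℂ) a * z ≠ 0) :
    HasDerivAt (mob a)
      (((starRingEnd ℂ) a * a - 1) / (1 - (starRingEnd ℂ) a * z) ^ 2) z := by
  have h1 : HasDerivAt (fun w : ℂ => a - w) (-1) z := by
    simpa using (hasDerivAt_id z).const_sub a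
  have h2 : HasDerivAt (fun w : ℂ => 1 - (starRingEnd ℂ) a * w) (-((starRingEnd ℂ) a)) z := by
    simpa using ((hasDerivAt_id z).const_mul ((starRingEnd ℂ) a)).const_sub 1
  have h3 := h1.div h2 h
  have e : mob a = (fun w => a - w) / fun w => 1 - (starRingEnd ℂ) a * w := rfl
  rw [e]
  refine h3.congr_deriv ?_
  ring

lemma mob_diffOn {a : ℂ} (ha : ‖a‖ < 1) :
    DifferentiableOn ℂ (mob a) (ball 0 1) := fun z hz =>
  ((mob_hasDeriv a (denom_ne ha (by simpa using mem_ball_zero_iff.1 hz))).differentiableAt).differentiableWithinAt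

lemma mob_mapsTo {a : ℂ} (ha : ‖a‖ < 1) :
    MapsTo (mob a) (ball 0 1) (ball 0 1) := fun z hz => by
  rw [mem_ball_zero_iff] at *
  exact mob_lt ha hz

lemma conj_mul' (z : ℂ) : (starRingEnd ℂ) z * z = (Complex.normSq z : ℂ) := by
  rw [mul_comm, Complex.mul_conj]

lemma schwarz_pick {ψ : ℂ → ℂ} (hd : DifferentiableOn ℂ ψ (ball 0 1))
    (hm : MapsTo ψ (ball 0 1) (ball 0 1)) {z : ℂ} (hz : z ∈ ball (0 : ℂ) 1) :
    (1 - ‖z‖ ^ 2) * ‖deriv ψ z‖ ≤ 1 - ‖ψ z‖ ^ 2 := by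
  have hz' : ‖z‖ < 1 := by
    exact mem_ball_zero_iff.1 hz
  have hb : ‖ψ z‖ < 1 := by
    exact mem_ball_zero_iff.1 (hm hz)
  set b := ψ z with hbdef
  set G : ℂ → ℂ := fun w => mob b (ψ (mob z w)) with hGdef
  have e0 : mob z 0 = z := by simp [mob]
  have ebb : mob b b = 0 := by simp [mob]
  have hdiff : DifferentiableOn ℂ G (ball 0 1) :=
    (mob_diffOn hb).comp (hd.comp (mob_diffOn hz') (mob_mapsTo hz'))
      (hm.comp (mob_mapsTo hz'))
  have hmaps : MapsTo G (ball 0 1) (ball 0 1) :=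
    ((mob_mapsTo hb).comp (hm.comp (mob_mapsTo hz')))
  have hG0 : G 0 = 0 := by simp [hGdef, e0, ← hbdef, ebb]
  have h1 : HasDerivAt (mob z) ((starRingEnd ℂ) z * z - 1) 0 := by
    have := mob_hasDeriv z (z := 0) (by simp)
    simpa using this
  have hψ : HasDerivAt ψ (deriv ψ z) (mob z 0) := by
    rw [e0]
    exact (hd.differentiableAt (isOpen_ball.mem_nhds hz)).hasDerivAt
  have h2 : HasDerivAt (mob b)
      (((starRingEnd ℂ) b * b - 1) / (1 - (starRingEnd ℂ) b * b) ^ 2) (ψ (mob z 0)) := by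
    rw [e0, ← hbdef]
    exact mob_hasDeriv b (denom_ne hb hb)
  have hG : HasDerivAt G
      ((((starRingEnd ℂ) b * b - 1) / (1 - (starRingEnd ℂ) b * b) ^ 2) *
        (deriv ψ z * ((starRingEnd ℂ) z * z - 1))) 0 :=
    by have := h2.comp 0 (hψ.comp 0 h1); exact this
  have hle : ‖deriv G 0‖ ≤ 1 :=
    Complex.norm_deriv_le_one_of_mapsTo_ball hdiff (by rw [hG0]; exact hmaps.mono_right ball_subset_closedBall) one_pos
  rw [hG.deriv] at hle
  set nb := Complex.normSq b with hnb
  set nz := Complex.normSq z with hnz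
  have hnb1 : nb < 1 := by rw [hnb, ← Complex.sq_norm]; nlinarith [norm_nonneg b]
  have hnz1 : nz < 1 := by rw [hnz, ← Complex.sq_norm]; nlinarith [norm_nonneg z]
  have habs : ‖(((starRingEnd ℂ) b * b - 1) / (1 - (starRingEnd ℂ) b * b) ^ 2) *
        (deriv ψ z * ((starRingEnd ℂ) z * z - 1))‖
      = ((1 - nb) / (1 - nb) ^ 2) * (‖deriv ψ z‖ * (1 - nz)) := by
    rw [conj_mul', conj_mul', ← hnb, ← hnz]
    rw [norm_mul, norm_div, norm_pow, norm_mul]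
    have c1 : ((nb : ℂ) - 1) = ((nb - 1 : ℝ) : ℂ) := by push_cast; ring
    have c2 : ((1 : ℂ) - (nb : ℂ)) = ((1 - nb : ℝ) : ℂ) := by push_cast; ring
    have c3 : ((nz : ℂ) - 1) = ((nz - 1 : ℝ) : ℂ) := by push_cast; ring
    rw [c1, c2, c3, Complex.norm_real, Real.norm_eq_abs, Complex.norm_real, Real.norm_eq_abs, Complex.norm_real, Real.norm_eq_abs]
    rw [abs_of_neg (by linarith), abs_of_pos (by linarith), abs_of_neg (by linarith)]
    ring
  rw [habs] at hle
  have hbpos : (0:ℝ) < 1 - nb := by linarith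
  have hd2 : ((1 - nb) / (1 - nb) ^ 2) = (1 - nb)⁻¹ := by
    field_simp
  rw [hd2] at hle
  have hA : 0 ≤ ‖deriv ψ z‖ := norm_nonneg _
  rw [Complex.sq_norm, Complex.sq_norm, ← hnz, ← hnb]
  have := (inv_mul_le_iff₀ hbpos).1 hle
  nlinarith

end SPick


/-- The open unit disk in `ℂ`. -/
def unitDisk : Set ℂ := Metric.ball (0 : ℂ) 1

/-- The set of values `(1-|z|²)^α (|f_z(z)| + |f_z̄(z)|)` for `z` in the unit disk, where the
harmonic function is `f = h + conj g` with `h, g` analytic, so `f_z = h'` and `f_z̄ = conj g'`. -/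
def hbSet (α : ℝ) (h g : ℂ → ℂ) : Set ℝ :=
  (fun z => (1 - ‖z‖ ^ 2) ^ α *
    (‖deriv h z‖ + ‖deriv g z‖)) '' unitDisk

/-- The harmonic α-Bloch seminorm `‖f‖_{HB(α)}` of `f = h + conj g`. -/
def hbSemi (α : ℝ) (h g : ℂ → ℂ) : ℝ := sSup (hbSet α h g)

/-- The harmonic α-Bloch norm `|||f|||_{HB(α)} = |f(0)| + ‖f‖_{HB(α)}` of `f = h + conj g`. -/
def hbNorm (α : ℝ) (h g : ℂ → ℂ) : ℝ :=
  ‖h 0 + (starRingEnd ℂ) (g 0)‖ + hbSemi α h g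

/-- An analytic self-map of the unit disk. -/
def IsSelfMap (φ : ℂ → ℂ) : Prop :=
  DifferentiableOn ℂ φ unitDisk ∧ MapsTo φ unitDisk unitDisk

/-- `f = h + conj g` is a harmonic α-Bloch function: `h, g` analytic on the disk and the
Bloch quantity is bounded. -/
def IsHB (α : ℝ) (h g : ℂ → ℂ) : Prop :=
  DifferentiableOn ℂ h unitDisk ∧ DifferentiableOn ℂ g unitDisk ∧ BddAbove (hbSet α h g)

/-- The composition operator `C_φ` is an isometry on `HB(α)`: `|||f∘φ||| = |||f|||` for every
harmonic α-Bloch function `f = h + conj g` (note `f ∘ φ = h∘φ + conj (g∘φ)`). -/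
def IsIsometryOn (α : ℝ) (φ : ℂ → ℂ) : Prop :=
  ∀ h g : ℂ → ℂ, IsHB α h g → hbNorm α (h ∘ φ) (g ∘ φ) = hbNorm α h g

/-- `φ` is a rotation of the unit disk. -/
def IsRotation (φ : ℂ → ℂ) : Prop :=
  ∃ lam : ℂ, ‖lam‖ = 1 ∧ ∀ z ∈ unitDisk, φ z = lam * z

/-- `τ_φ(z) = (1-|z|²)|φ'(z)| / (1-|φ(z)|²)`. -/
def tauPhi (φ : ℂ → ℂ) (z : ℂ) : ℝ :=
  (1 - ‖z‖ ^ 2) * ‖deriv φ z‖ / (1 - ‖φ z‖ ^ 2)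

/-- if `C_φ` is an isometry of the harmonic Bloch norm `|||·|||_{HB(1)}`, then
`φ(0) = 0`. -/
theorem stmt2 (φ : ℂ → ℂ) (hφ : IsSelfMap φ) (hiso : IsIsometryOn 1 φ) : φ 0 = 0 := by
  obtain ⟨hφd, hφm⟩ := hφ
  set a := φ 0 with hadef
  have h0 : (0 : ℂ) ∈ unitDisk := mem_ball_self one_pos
  have ha : ‖a‖ < 1 := by
    exact mem_ball_zero_iff.1 (hφm h0)
  set A := ‖a‖ with hA
  have hA0 : (0:ℝ) ≤ A := norm_nonneg a
  have hA2 : (0:ℝ) < 1 - A ^ 2 := by nlinarith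
  set F : ℂ → ℂ := fun z => (starRingEnd ℂ) a * SPick.mob a z with hF
  have hFder : ∀ z : ℂ, ‖z‖ < 1 →
      HasDerivAt F ((starRingEnd ℂ) a *
        (((starRingEnd ℂ) a * a - 1) / (1 - (starRingEnd ℂ) a * z) ^ 2)) z := fun z hz =>
    (SPick.mob_hasDeriv a (SPick.denom_ne ha hz)).const_mul _
  have habsF : ∀ z : ℂ,
      ‖(starRingEnd ℂ) a *
        (((starRingEnd ℂ) a * a - 1) / (1 - (starRingEnd ℂ) a * z) ^ 2)‖
      = A * (1 - A ^ 2) / (‖1 - (starRingEnd ℂ) a * z‖) ^ 2 := by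
    intro z
    rw [norm_mul, norm_div, norm_pow, Complex.norm_conj, SPick.conj_mul']
    have c1 : ((Complex.normSq a : ℂ) - 1) = ((Complex.normSq a - 1 : ℝ) : ℂ) := by
      push_cast; ring
    rw [c1, Complex.norm_real, Real.norm_eq_abs, ← Complex.sq_norm, ← hA, abs_of_neg (by nlinarith)]
    ring
  have elt : ∀ z : ℂ, ‖z‖ < 1 →
      (1 - ‖z‖ ^ 2) ^ (1:ℝ) * (‖deriv F z‖ + ‖deriv F z‖)
      = 2 * ((1 - ‖z‖ ^ 2) *
          (A * (1 - A ^ 2) / (‖1 - (starRingEnd ℂ) a * z‖) ^ 2)) := by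
    intro z hz
    rw [Real.rpow_one, (hFder z hz).deriv, habsF z]
    ring
  have hbound : ∀ w : ℂ, ‖w‖ < 1 →
      (1 - ‖w‖ ^ 2) *
        (A * (1 - A ^ 2) / (‖1 - (starRingEnd ℂ) a * w‖) ^ 2) ≤ A := by
    intro w hw
    have hd := SPick.denom_ne ha hw
    have hD : (0:ℝ) < (‖1 - (starRingEnd ℂ) a * w‖) ^ 2 :=
      pow_pos (norm_pos_iff.mpr hd) 2
    have key := SPick.key_ineq a w
    rw [show (1 - ‖w‖ ^ 2) *
          (A * (1 - A ^ 2) / (‖1 - (starRingEnd ℂ) a * w‖) ^ 2)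
        = (A * ((1 - A ^ 2) * (1 - ‖w‖ ^ 2))) /
            (‖1 - (starRingEnd ℂ) a * w‖) ^ 2 from by ring,
      div_le_iff₀ hD]
    rw [← hA] at key
    exact mul_le_mul_of_nonneg_left key hA0
  have hub : ∀ x ∈ hbSet 1 F F, x ≤ 2 * A := by
    rintro x ⟨w, hw, rfl⟩
    have hw' : ‖w‖ < 1 := by
      exact mem_ball_zero_iff.1 hw
    dsimp only
    rw [elt w hw']
    nlinarith [hbound w hw']
  have hmem : 2 * A ∈ hbSet 1 F F := by
    refine ⟨a, mem_ball_zero_iff.2 (by exact ha), ?_⟩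
    dsimp only
    rw [elt a ha]
    have hca : (starRingEnd ℂ) a * a = ((A ^ 2 : ℝ) : ℂ) := by
      rw [SPick.conj_mul', ← Complex.sq_norm, ← hA]
    have hden : ‖1 - (starRingEnd ℂ) a * a‖ = 1 - A ^ 2 := by
      rw [hca, show (1:ℂ) - ((A ^ 2 : ℝ) : ℂ) = ((1 - A ^ 2 : ℝ) : ℂ) from by push_cast; ring,
        Complex.norm_real, Real.norm_eq_abs, abs_of_pos hA2]
    rw [hden]
    field_simp
    ring
  have hbdd : BddAbove (hbSet 1 F F) := ⟨2 * A, fun x hx => hub x hx⟩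
  have hsemi : hbSemi 1 F F = 2 * A :=
    le_antisymm (Real.sSup_le hub (by positivity)) (le_csSup hbdd hmem)
  have hFdiff : DifferentiableOn ℂ F unitDisk := fun z hz =>
    ((hFder z (by exact mem_ball_zero_iff.1 hz)).differentiableAt).differentiableWithinAt
  have hHB : IsHB 1 F F := ⟨hFdiff, hFdiff, hbdd⟩
  have hF0 : F 0 = ((A ^ 2 : ℝ) : ℂ) := by
    have h1 : F 0 = (starRingEnd ℂ) a * a := by simp [hF, SPick.mob]
    rw [h1, SPick.conj_mul', ← Complex.sq_norm, ← hA]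
  have hnorm : hbNorm 1 F F = 2 * A ^ 2 + 2 * A := by
    simp only [hbNorm, hsemi, hF0, Complex.conj_ofReal]
    rw [show ((A ^ 2 : ℝ) : ℂ) + ((A ^ 2 : ℝ) : ℂ) = ((2 * A ^ 2 : ℝ) : ℂ) from by push_cast; ring,
      Complex.norm_real, Real.norm_eq_abs, _root_.abs_of_nonneg (by positivity)]
  have hc0 : (F ∘ φ) 0 = 0 := by
    simp [hF, SPick.mob, ← hadef]
  have hcomp_ub : ∀ x ∈ hbSet 1 (F ∘ φ) (F ∘ φ), x ≤ 2 * A := by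
    rintro x ⟨z, hz, rfl⟩
    have hz' : ‖z‖ < 1 := by
      exact mem_ball_zero_iff.1 hz
    have hφz : ‖φ z‖ < 1 := by
      exact mem_ball_zero_iff.1 (hφm hz)
    have hφder : HasDerivAt φ (deriv φ z) z :=
      (hφd.differentiableAt (isOpen_ball.mem_nhds hz)).hasDerivAt
    have hder : HasDerivAt (F ∘ φ)
        (((starRingEnd ℂ) a *
          (((starRingEnd ℂ) a * a - 1) / (1 - (starRingEnd ℂ) a * φ z) ^ 2)) * deriv φ z) z :=
      (hFder (φ z) hφz).comp z hφder
    dsimp only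
    rw [Real.rpow_one, hder.deriv, norm_mul, habsF (φ z)]
    set Q := A * (1 - A ^ 2) / (‖1 - (starRingEnd ℂ) a * φ z‖) ^ 2 with hQ
    set p := ‖deriv φ z‖ with hp
    have hQ0 : (0:ℝ) ≤ Q := by
      rw [hQ]; positivity
    have hsp := SPick.schwarz_pick hφd hφm hz
    have hb2 := hbound (φ z) hφz
    rw [← hQ] at hb2
    have e1 : (1 - ‖z‖ ^ 2) * (Q * p + Q * p)
        = 2 * (Q * ((1 - ‖z‖ ^ 2) * p)) := by ring
    rw [e1]
    have h2 : Q * ((1 - ‖z‖ ^ 2) * p) ≤ Q * (1 - ‖φ z‖ ^ 2) :=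
      mul_le_mul_of_nonneg_left hsp hQ0
    have h3 : Q * (1 - ‖φ z‖ ^ 2) ≤ A := by rw [mul_comm]; exact hb2
    linarith
  have hiso' := hiso F F hHB
  rw [hnorm] at hiso'
  have hle : hbNorm 1 (F ∘ φ) (F ∘ φ) ≤ 2 * A := by
    simp only [hbNorm, hc0, map_zero, add_zero, map_zero, norm_zero, zero_add]
    exact Real.sSup_le hcomp_ub (by positivity)
  rw [hiso'] at hle
  have hA0' : ‖a‖ = 0 := by rw [← hA]; nlinarith
  exact norm_eq_zero.1 hA0'
end
end

section
/- For a ∈ D with a ≠ 0, the harmonic function f(z) = ā·φ_a(z) + a·conj(φ_a(z)), where φ_a(z) = (a-z)/(1-āz), satisfies |||f|||_{HB(1)} = 2|a|² + 2|a|. -/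
open Complex Metric Set Filter
noncomputable section

/-- for `a ∈ D`, `a ≠ 0`, the harmonic function
`f = ā φ_a + a conj(φ_a)` with `φ_a(z) = (a-z)/(1-āz)` (so `f = h + conj g` with
`h = g = ā φ_a`) satisfies `|||f|||_{HB(1)} = 2|a|² + 2|a|`. -/
theorem stmt3 (a : ℂ) (ha : a ∈ unitDisk) (ha0 : a ≠ 0) :
    hbNorm 1 (fun z => (starRingEnd ℂ) a * ((a - z) / (1 - (starRingEnd ℂ) a * z)))
      (fun z => (starRingEnd ℂ) a * ((a - z) / (1 - (starRingEnd ℂ) a * z))) =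
    2 * ‖a‖ ^ 2 + 2 * ‖a‖ := by
  set c := (starRingEnd ℂ) a with hc
  set h : ℂ → ℂ := fun z => c * ((a - z) / (1 - c * z)) with hh
  have hr1 : ‖a‖ < 1 := by
    simpa [unitDisk, Complex.dist_eq] using ha
  have hr0 : 0 < ‖a‖ := norm_pos_iff.mpr ha0
  have hca : ‖c‖ = ‖a‖ := Complex.norm_conj a
  have hsq : ‖a‖ ^ 2 < 1 := by nlinarith
  have hden : ∀ z ∈ unitDisk, (1 : ℂ) - c * z ≠ 0 := by
    intro z hz h0
    have hz1 : ‖z‖ < 1 := by simpa [unitDisk, Complex.dist_eq] using hz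
    rw [sub_eq_zero] at h0
    have h1 : ‖c * z‖ = 1 := by rw [← h0]; simp
    rw [norm_mul, hca] at h1
    nlinarith [norm_nonneg z, norm_nonneg a]
  have hderiv : ∀ z ∈ unitDisk, deriv h z = c * ((c * a - 1) / (1 - c * z) ^ 2) := by
    intro z hz
    have hne := hden z hz
    have h1 : HasDerivAt (fun z : ℂ => a - z) (-1) z := (hasDerivAt_id z).const_sub a
    have h2 : HasDerivAt (fun z : ℂ => 1 - c * z) (-c) z := by
      simpa using ((hasDerivAt_id z).const_mul c).const_sub 1
    have h3 := (h1.div h2 hne).const_mul c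
    have e : (-1 * (1 - c * z) - (a - z) * (-c)) = c * a - 1 := by ring
    rw [e] at h3
    exact h3.deriv
  have habs : ∀ z ∈ unitDisk, ‖deriv h z‖ =
      ‖a‖ * (1 - ‖a‖ ^ 2) / ‖1 - c * z‖ ^ 2 := by
    intro z hz
    rw [hderiv z hz, norm_mul, norm_div, norm_pow, hca]
    have e1 : c * a - 1 = ((Complex.normSq a - 1 : ℝ) : ℂ) := by
      rw [hc, mul_comm, Complex.mul_conj]
      push_cast
      ring
    rw [e1, Complex.norm_real, Real.norm_eq_abs, abs_of_nonpos (by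
      have := Complex.normSq_eq_norm_sq a
      nlinarith), Complex.normSq_eq_norm_sq]
    ring
  have hval : ∀ z ∈ unitDisk,
      (1 - ‖z‖ ^ 2) ^ (1 : ℝ) *
        (‖deriv h z‖ + ‖deriv h z‖) =
      2 * ‖a‖ * ((1 - ‖z‖ ^ 2) * (1 - ‖a‖ ^ 2))
        / ‖1 - c * z‖ ^ 2 := by
    intro z hz
    rw [Real.rpow_one, habs z hz]
    ring
  have hmem : 2 * ‖a‖ ∈ hbSet 1 h h := by
    refine ⟨a, ha, ?_⟩
    show (1 - ‖a‖ ^ 2) ^ (1:ℝ) * (‖deriv h a‖ + ‖deriv h a‖) = _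
    rw [hval a ha]
    have e2 : (1 : ℂ) - c * a = ((1 - ‖a‖ ^ 2 : ℝ) : ℂ) := by
      rw [hc, mul_comm, Complex.mul_conj, ← Complex.normSq_eq_norm_sq]
      push_cast
      ring
    rw [e2, Complex.norm_real, Real.norm_eq_abs, abs_of_pos (by nlinarith)]
    have hne : (1 : ℝ) - ‖a‖ ^ 2 ≠ 0 := by nlinarith
    field_simp
  have hub : ∀ x ∈ hbSet 1 h h, x ≤ 2 * ‖a‖ := by
    rintro x ⟨z, hz, rfl⟩
    simp only
    rw [hval z hz]
    have hz1 : ‖z‖ < 1 := by simpa [unitDisk, Complex.dist_eq] using hz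
    have hpos : 0 < ‖1 - c * z‖ ^ 2 :=
      pow_pos (norm_pos_iff.mpr (hden z hz)) 2
    have hkey : (1 - ‖z‖ ^ 2) * (1 - ‖a‖ ^ 2) ≤
        ‖1 - c * z‖ ^ 2 := by
      have e : Complex.normSq (1 - c * z) =
          (1 - Complex.normSq z) * (1 - Complex.normSq a) + Complex.normSq (a - z) := by
        simp [Complex.normSq_apply, hc, Complex.sub_re, Complex.sub_im, Complex.mul_re,
          Complex.mul_im, Complex.conj_re, Complex.conj_im, Complex.one_re, Complex.one_im]
        ring
      rw [Complex.sq_norm, Complex.sq_norm, Complex.sq_norm, e]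
      nlinarith [Complex.normSq_nonneg (a - z)]
    rw [div_le_iff₀ hpos]
    nlinarith [hr0, hkey, norm_nonneg a]
  have hsemi : hbSemi 1 h h = 2 * ‖a‖ := by
    rw [hbSemi]
    exact le_antisymm (csSup_le ⟨_, hmem⟩ hub) (le_csSup ⟨2 * ‖a‖, hub⟩ hmem)
  have h00 : h 0 = ((Complex.normSq a : ℝ) : ℂ) := by
    rw [hh]
    simp only [sub_zero, mul_zero, div_one]
    rw [hc, mul_comm, Complex.mul_conj]
  rw [hbNorm, hsemi, h00]
  have : ((Complex.normSq a : ℝ) : ℂ) + (starRingEnd ℂ) ((Complex.normSq a : ℝ) : ℂ)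
      = ((2 * Complex.normSq a : ℝ) : ℂ) := by
    rw [Complex.conj_ofReal]; push_cast; ring
  rw [this, Complex.norm_real, Real.norm_eq_abs, _root_.abs_of_nonneg (by nlinarith [Complex.normSq_nonneg a]), Complex.normSq_eq_norm_sq]
end
end

section
/- If φ is an analytic self-map of the unit disk D with φ(0) = 0, and C_φ is an isometry on the harmonic Bloch space HB(1), and φ' is bounded on D, then φ is a rotation, i.e., φ(z) = λz for some λ with |λ| = 1. -/
open Complex Metric Set Filter Topology
noncomputable section

namespace Stmt4Aux

lemma mem_unitDisk {w : ℂ} : w ∈ unitDisk ↔ ‖w‖ < 1 := by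
  simp [unitDisk, Complex.dist_eq]

def moeb (a w : ℂ) : ℂ := (w + a) / (1 + (starRingEnd ℂ) a * w)

lemma den_ne_zero {a w : ℂ} (ha : ‖a‖ < 1) (hw : ‖w‖ < 1) :
    1 + (starRingEnd ℂ) a * w ≠ 0 := by
  intro h
  have h1 : (starRingEnd ℂ) a * w = -1 := by linear_combination h
  have h2 : ‖(starRingEnd ℂ) a * w‖ = 1 := by rw [h1]; simp
  rw [norm_mul, Complex.norm_conj] at h2
  nlinarith [norm_nonneg a, norm_nonneg w]

lemma key_normSq (a w : ℂ) :
    Complex.normSq (1 + (starRingEnd ℂ) a * w) - Complex.normSq (w + a)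
      = (1 - Complex.normSq a) * (1 - Complex.normSq w) := by
  have h : ((Complex.normSq (1 + (starRingEnd ℂ) a * w) : ℂ)) - (Complex.normSq (w + a) : ℂ)
      = ((1 : ℂ) - Complex.normSq a) * ((1 : ℂ) - Complex.normSq w) := by
    rw [← Complex.mul_conj, ← Complex.mul_conj, ← Complex.mul_conj, ← Complex.mul_conj]
    simp only [map_add, map_mul, map_one, Complex.conj_conj]
    ring
  exact_mod_cast h

lemma moeb_mem {a w : ℂ} (ha : ‖a‖ < 1) (hw : ‖w‖ < 1) :
    ‖moeb a w‖ < 1 := by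
  have hden := den_ne_zero ha hw
  have hlt : Complex.normSq (w + a) < Complex.normSq (1 + (starRingEnd ℂ) a * w) := by
    have hk := key_normSq a w
    have ha' : Complex.normSq a < 1 := by rw [← Complex.sq_norm]; nlinarith [norm_nonneg a]
    have hw' : Complex.normSq w < 1 := by rw [← Complex.sq_norm]; nlinarith [norm_nonneg w]
    nlinarith
  have habs : ‖w + a‖ < ‖1 + (starRingEnd ℂ) a * w‖ := by
    rw [← Complex.sq_norm, ← Complex.sq_norm] at hlt
    exact lt_of_pow_lt_pow_left₀ 2 (norm_nonneg _) hlt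
  rw [moeb, norm_div, div_lt_one (lt_of_le_of_lt (norm_nonneg _) habs)]
  exact habs

lemma moeb_hasDerivAt (a w : ℂ) (h : 1 + (starRingEnd ℂ) a * w ≠ 0) :
    HasDerivAt (moeb a) ((1 - a * (starRingEnd ℂ) a) / (1 + (starRingEnd ℂ) a * w) ^ 2) w := by
  have h1 : HasDerivAt (fun z : ℂ => z + a) 1 w := (hasDerivAt_id w).add_const a
  have h2 : HasDerivAt (fun z : ℂ => 1 + (starRingEnd ℂ) a * z) ((starRingEnd ℂ) a) w := by
    simpa using ((hasDerivAt_id w).const_mul ((starRingEnd ℂ) a)).const_add 1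
  have h3 := h1.div h2 h
  have h4 : HasDerivAt (moeb a) ((1 * (1 + (starRingEnd ℂ) a * w) - (w + a) * (starRingEnd ℂ) a) /
      (1 + (starRingEnd ℂ) a * w) ^ 2) w := h3
  convert h4 using 1
  ring

lemma moeb_diffOn {a : ℂ} (ha : ‖a‖ < 1) :
    DifferentiableOn ℂ (moeb a) unitDisk := fun w hw =>
  ((moeb_hasDerivAt a w (den_ne_zero ha (mem_unitDisk.mp hw))).differentiableAt).differentiableWithinAt

lemma moeb_mapsTo {a : ℂ} (ha : ‖a‖ < 1) :
    MapsTo (moeb a) unitDisk unitDisk := fun w hw =>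
  mem_unitDisk.mpr (moeb_mem ha (mem_unitDisk.mp hw))

lemma moeb_zero_right (a : ℂ) : moeb a 0 = a := by simp [moeb]

lemma moeb_neg_self (a : ℂ) : moeb a (-a) = 0 := by simp [moeb]

lemma moeb_zero_left (w : ℂ) : moeb 0 w = w := by simp [moeb]

lemma step3 (φ : ℂ → ℂ) (hdiff : DifferentiableOn ℂ φ unitDisk)
    (hmaps : MapsTo φ unitDisk unitDisk) (h0 : φ 0 = 0) {c : ℂ} (hcD : c ∈ unitDisk)
    (hβ : 1 ≤ (1 - ‖c‖ ^ 2) * ‖deriv φ c‖) :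
    IsRotation φ := by
  have hcabs : ‖c‖ < 1 := mem_unitDisk.mp hcD
  set b : ℂ := φ c with hbdef
  have hbD : b ∈ unitDisk := hmaps hcD
  have hbabs : ‖b‖ < 1 := mem_unitDisk.mp hbD
  set sb : ℝ := Complex.normSq b with hsbdef
  set sc : ℝ := Complex.normSq c with hscdef
  have hsb1 : sb < 1 := by
    rw [hsbdef, ← Complex.sq_norm]; nlinarith [norm_nonneg b]
  have hsb0 : 0 ≤ sb := Complex.normSq_nonneg b
  have hsc : sc = ‖c‖ ^ 2 := (Complex.sq_norm c).symm
  -- derivatives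
  have hd1 : HasDerivAt (moeb c) (1 - c * (starRingEnd ℂ) c) 0 := by
    have := moeb_hasDerivAt c 0 (by simp)
    simpa using this
  have hφc : DifferentiableAt ℂ φ c := hdiff.differentiableAt (isOpen_ball.mem_nhds hcD)
  have hmoeb_c0 : moeb c 0 = c := moeb_zero_right c
  have hd2 : HasDerivAt φ (deriv φ c) (moeb c 0) := by rw [hmoeb_c0]; exact hφc.hasDerivAt
  have hinner : HasDerivAt (φ ∘ moeb c) (deriv φ c * (1 - c * (starRingEnd ℂ) c)) 0 :=
    hd2.comp (0 : ℂ) hd1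
  have hbcb : (-b) * (starRingEnd ℂ) (-b) = (sb : ℂ) := by
    rw [mul_comm, map_neg, neg_mul_neg, mul_comm, Complex.mul_conj]
  have hcbb : (starRingEnd ℂ) (-b) * b = -(sb : ℂ) := by
    rw [map_neg, neg_mul, mul_comm, Complex.mul_conj]
  have hdenb : 1 + (starRingEnd ℂ) (-b) * b ≠ 0 := by
    rw [hcbb]
    intro h
    have h1 : (sb : ℂ) = 1 := by linear_combination -h
    have h2 : sb = 1 := by exact_mod_cast h1
    linarith
  have hd3 : HasDerivAt (moeb (-b))
      ((1 - (-b) * (starRingEnd ℂ) (-b)) / (1 + (starRingEnd ℂ) (-b) * b) ^ 2)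
      ((φ ∘ moeb c) 0) := by
    have h : (φ ∘ moeb c) 0 = b := by simp [Function.comp_apply, hmoeb_c0, hbdef]
    rw [h]
    exact moeb_hasDerivAt (-b) b hdenb
  have hchain : HasDerivAt (moeb (-b) ∘ φ ∘ moeb c)
      (((1 - (-b) * (starRingEnd ℂ) (-b)) / (1 + (starRingEnd ℂ) (-b) * b) ^ 2) *
        (deriv φ c * (1 - c * (starRingEnd ℂ) c))) 0 :=
    hd3.comp (0 : ℂ) hinner
  set χf : ℂ → ℂ := moeb (-b) ∘ φ ∘ moeb c with hχfdef
  have hχf0 : χf 0 = 0 := by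
    show moeb (-b) (φ (moeb c 0)) = 0
    rw [hmoeb_c0, ← hbdef]
    have := moeb_neg_self (-b)
    rwa [neg_neg] at this
  have hnbabs : ‖-b‖ < 1 := by simpa using hbabs
  have hχfdiff : DifferentiableOn ℂ χf unitDisk :=
    ((moeb_diffOn hnbabs).comp (hdiff.comp (moeb_diffOn hcabs) (moeb_mapsTo hcabs))
      (hmaps.comp (moeb_mapsTo hcabs)))
  have hχfmaps : MapsTo χf unitDisk unitDisk :=
    ((moeb_mapsTo hnbabs).comp (hmaps.comp (moeb_mapsTo hcabs)))
  -- Schwarz inequality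
  have hs : ‖deriv χf 0‖ ≤ 1 / 1 := by
    refine Complex.norm_deriv_le_div_of_mapsTo_ball hχfdiff ?_ one_pos
    rw [hχf0]
    exact hχfmaps.mono_right ball_subset_closedBall
  rw [hchain.deriv] at hs
  -- compute the absolute value
  have hcast1 : (1 : ℂ) - (sb : ℂ) = ((1 - sb : ℝ) : ℂ) := by push_cast; ring
  have hcast2 : (1 : ℂ) + -(sb : ℂ) = ((1 - sb : ℝ) : ℂ) := by push_cast; ring
  have habsD : 
      ‖((1 - (-b) * (starRingEnd ℂ) (-b)) / (1 + (starRingEnd ℂ) (-b) * b) ^ 2) *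
        (deriv φ c * (1 - c * (starRingEnd ℂ) c))‖
      = ((1 - sb) / (1 - sb) ^ 2) * (‖deriv φ c‖ * (1 - sc)) := by
    rw [hbcb, hcbb, hcast1, hcast2]
    rw [show (1 : ℂ) - c * (starRingEnd ℂ) c = ((1 - sc : ℝ) : ℂ) by
      rw [Complex.mul_conj]; push_cast; ring]
    rw [norm_mul, norm_div, norm_pow, norm_mul, Complex.norm_real, Complex.norm_real, Real.norm_eq_abs, Real.norm_eq_abs]
    rw [_root_.abs_of_nonneg (by linarith : (0:ℝ) ≤ 1 - sb),
      _root_.abs_of_nonneg (by rw [hsc]; nlinarith [norm_nonneg c] : (0:ℝ) ≤ 1 - sc)]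
  rw [habsD] at hs
  have hA : 1 ≤ ‖deriv φ c‖ * (1 - sc) := by rw [hsc]; linarith [hβ]
  have htpos : 0 < 1 - sb := by linarith
  have hfrac : (1 - sb) / (1 - sb) ^ 2 = 1 / (1 - sb) := by
    field_simp
  rw [hfrac] at hs
  have hb0 : sb = 0 := by
    have h1 : 1 / (1 - sb) * 1 ≤ 1 / (1 - sb) * (‖deriv φ c‖ * (1 - sc)) := by
      apply mul_le_mul_of_nonneg_left hA (by positivity)
    have h2 : 1 / (1 - sb) ≤ 1 := by linarith [h1.trans hs]
    rw [div_le_one htpos] at h2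
    linarith
  have hbzero : b = 0 := by
    rw [hsbdef] at hb0
    exact Complex.normSq_eq_zero.mp hb0
  have hβeq : ‖deriv φ c‖ * (1 - sc) = 1 := by
    rw [hb0] at hs
    simp only [sub_zero, one_pow, div_one, one_mul] at hs
    linarith
  -- equality case of Schwarz for χ = φ ∘ moeb c
  set χ : ℂ → ℂ := φ ∘ moeb c with hχdef
  have hχ0 : χ 0 = 0 := by
    show φ (moeb c 0) = 0
    rw [hmoeb_c0, ← hbdef, hbzero]
  have hχdiff : DifferentiableOn ℂ χ unitDisk :=
    hdiff.comp (moeb_diffOn hcabs) (moeb_mapsTo hcabs)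
  have hχmaps : MapsTo χ (ball (0:ℂ) 1) (ball (χ 0) 1) := by
    rw [hχ0]
    exact hmaps.comp (moeb_mapsTo hcabs)
  have hderχ : deriv χ 0 = deriv φ c * (1 - c * (starRingEnd ℂ) c) := hinner.deriv
  have habsχ : ‖dslope χ 0 0‖ = 1 / 1 := by
    rw [dslope_same, hderχ, norm_mul,
      show (1 : ℂ) - c * (starRingEnd ℂ) c = ((1 - sc : ℝ) : ℂ) by
        rw [Complex.mul_conj]; push_cast; ring,
      Complex.norm_real, Real.norm_eq_abs,
      _root_.abs_of_nonneg (by rw [hsc]; nlinarith [norm_nonneg c] : (0:ℝ) ≤ 1 - sc)]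
    rw [hβeq]
    norm_num
  have heqOn := Complex.affine_of_mapsTo_ball_of_norm_dslope_eq_div
    hχdiff (hχmaps.mono_right ball_subset_closedBall) (mem_ball_self one_pos) habsχ
  set lam : ℂ := dslope χ 0 0 with hlamdef
  have hlamabs : ‖lam‖ = 1 := by
    have := habsχ
    simpa using this
  have hlamne : lam ≠ 0 := by
    intro h
    rw [h] at hlamabs
    simp at hlamabs
  -- evaluate at -c
  have hncD : -c ∈ ball (0:ℂ) 1 := by
    exact mem_unitDisk.mpr (by simpa using hcabs)
  have hχnc : χ (-c) = 0 := by
    show φ (moeb c (-c)) = 0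
    rw [moeb_neg_self, h0]
  have hc0 : c = 0 := by
    have := heqOn hncD
    rw [hχnc, hχ0] at this
    simp only [zero_add, sub_zero, smul_eq_mul] at this
    have : (-c) * lam = 0 := this.symm
    rcases mul_eq_zero.mp this with h | h
    · exact neg_eq_zero.mp h
    · exact absurd h hlamne
  -- conclude
  refine ⟨lam, hlamabs, fun w hw => ?_⟩
  have hw' : w ∈ ball (0:ℂ) 1 := hw
  have := heqOn hw'
  rw [hχ0] at this
  have hχw : χ w = φ w := by
    show φ (moeb c w) = φ w
    rw [hc0, moeb_zero_left]
  rw [hχw] at this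
  rw [this]
  simp [smul_eq_mul, mul_comm]


lemma step1 (φ : ℂ → ℂ) (h0 : φ 0 = 0) (hiso : IsIsometryOn 1 φ) :
    sSup ((fun z => (1 - ‖z‖ ^ 2) * ‖deriv φ z‖) '' unitDisk) = 1 := by
  have hHB : IsHB 1 id (fun _ => (0 : ℂ)) := by
    refine ⟨differentiableOn_id, differentiableOn_const 0, ⟨1, ?_⟩⟩
    rintro x ⟨z, hz, rfl⟩
    have hz' : ‖z‖ < 1 := mem_unitDisk.mp hz
    simp only [deriv_id, deriv_const', norm_one, norm_zero, add_zero, Real.rpow_one, mul_one]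
    nlinarith [norm_nonneg z]
  have hgreat : IsGreatest (hbSet 1 id (fun _ => (0 : ℂ))) 1 := by
    constructor
    · exact ⟨0, mem_unitDisk.mpr (by simp), by simp⟩
    · rintro x ⟨z, hz, rfl⟩
      have hz' : ‖z‖ < 1 := mem_unitDisk.mp hz
      simp only [deriv_id, deriv_const', norm_one, norm_zero, add_zero, Real.rpow_one, mul_one]
      nlinarith [norm_nonneg z]
  have hRnorm : hbNorm 1 id (fun _ => (0 : ℂ)) = 1 := by
    rw [hbNorm, hbSemi, hgreat.csSup_eq]
    simp
  have heq := hiso id (fun _ => (0 : ℂ)) hHB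
  rw [hRnorm] at heq
  have hset : hbSet 1 (id ∘ φ) ((fun _ => (0 : ℂ)) ∘ φ)
      = (fun z => (1 - ‖z‖ ^ 2) * ‖deriv φ z‖) '' unitDisk := by
    rw [hbSet]
    congr 1
    funext z
    have hc : ((fun _ : ℂ => (0:ℂ)) ∘ φ) = fun _ => (0:ℂ) := rfl
    rw [Function.id_comp, hc]
    simp [deriv_const', Real.rpow_one]
  rw [hbNorm, hbSemi, hset] at heq
  simpa [h0] using heq

lemma step2 (φ : ℂ → ℂ) (hφ : DifferentiableOn ℂ φ unitDisk)
    (hbdd : ∃ M : ℝ, ∀ z ∈ unitDisk, ‖deriv φ z‖ ≤ M)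
    (hsup : sSup ((fun z => (1 - ‖z‖ ^ 2) * ‖deriv φ z‖) '' unitDisk) = 1) :
    ∃ c ∈ unitDisk, 1 ≤ (1 - ‖c‖ ^ 2) * ‖deriv φ c‖ := by
  set β : ℂ → ℝ := fun z => (1 - ‖z‖ ^ 2) * ‖deriv φ z‖ with hβ
  obtain ⟨M₀, hM₀⟩ := hbdd
  set M : ℝ := max M₀ 1 with hMdef
  have hM1 : (1 : ℝ) ≤ M := le_max_right _ _
  have hM : ∀ z ∈ unitDisk, ‖deriv φ z‖ ≤ M :=
    fun z hz => (hM₀ z hz).trans (le_max_left _ _)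
  have hM0 : (0 : ℝ) < M := lt_of_lt_of_le one_pos hM1
  have hSne : ((fun z => (1 - ‖z‖ ^ 2) * ‖deriv φ z‖) '' unitDisk).Nonempty :=
    ⟨_, ⟨0, mem_unitDisk.mpr (by simp), rfl⟩⟩
  have hseq : ∀ n : ℕ, ∃ w, w ∈ unitDisk ∧ 1 - 1 / ((n : ℝ) + 2) < β w := by
    intro n
    have hpos : (0 : ℝ) < 1 / ((n : ℝ) + 2) := by positivity
    have hlt : 1 - 1 / ((n : ℝ) + 2) < sSup ((fun z => (1 - ‖z‖ ^ 2) * ‖deriv φ z‖) '' unitDisk) := by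
      rw [hsup]; linarith
    obtain ⟨x, hx, hlt'⟩ := exists_lt_of_lt_csSup hSne hlt
    obtain ⟨w, hw, rfl⟩ := hx
    exact ⟨w, hw, hlt'⟩
  choose z hzD hzgt using hseq
  set r : ℝ := Real.sqrt (1 - 1 / (2 * M)) with hrdef
  have h2M : (0 : ℝ) < 1 / (2 * M) := by positivity
  have h2M' : 1 / (2 * M) ≤ 1 / 2 := by
    apply one_div_le_one_div_of_le <;> linarith
  have hr2 : r ^ 2 = 1 - 1 / (2 * M) := Real.sq_sqrt (by linarith)
  have hr1 : r < 1 := by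
    have := Real.sqrt_lt_sqrt (by linarith : (0:ℝ) ≤ 1 - 1 / (2 * M)) (by linarith : 1 - 1 / (2*M) < 1)
    rwa [Real.sqrt_one] at this
  have hr0 : 0 ≤ r := Real.sqrt_nonneg _
  have hmem : ∀ n, z n ∈ closedBall (0 : ℂ) r := by
    intro n
    have h1 : (1 : ℝ) / 2 < β (z n) := by
      have : 1 / ((n : ℝ) + 2) ≤ 1 / 2 := by
        apply one_div_le_one_div_of_le
        · norm_num
        · have : (0:ℝ) ≤ (n:ℝ) := Nat.cast_nonneg n
          linarith
      linarith [hzgt n]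
    have habs : ‖z n‖ < 1 := mem_unitDisk.mp (hzD n)
    have hd : ‖deriv φ (z n)‖ ≤ M := hM _ (hzD n)
    have hpos : 0 < 1 - ‖z n‖ ^ 2 := by nlinarith [norm_nonneg (z n)]
    have h1' : 1 / 2 < (1 - ‖z n‖ ^ 2) * ‖deriv φ (z n)‖ := h1
    have hlow : 1 / (2 * M) < 1 - ‖z n‖ ^ 2 := by
      rw [div_lt_iff₀ (by positivity)]
      nlinarith [norm_nonneg (deriv φ (z n))]
    have : ‖z n‖ ≤ r := by
      rw [hrdef, Real.le_sqrt (norm_nonneg _) (by linarith)]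
      linarith
    simpa using this
  obtain ⟨c, hcK, ψ, hψ, htend⟩ := (isCompact_closedBall (0 : ℂ) r).tendsto_subseq hmem
  have hcD : c ∈ unitDisk := by
    rw [mem_unitDisk]
    have : ‖c‖ ≤ r := by simpa using hcK
    linarith
  -- continuity of β at c
  have han : AnalyticOnNhd ℂ φ unitDisk := hφ.analyticOnNhd isOpen_ball
  have hdcont : ContinuousAt (deriv φ) c :=
    (han.deriv.differentiableOn.continuousOn).continuousAt (isOpen_ball.mem_nhds hcD)
  have hβcont : ContinuousAt β c := by
    apply ContinuousAt.mul
    · exact (continuous_const.sub (continuous_norm.pow 2)).continuousAt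
    · exact continuous_norm.continuousAt.comp hdcont
  have hβtend : Tendsto (fun n => β (z (ψ n))) atTop (𝓝 (β c)) :=
    hβcont.tendsto.comp htend
  have hone : Tendsto (fun n : ℕ => 1 - 1 / ((n : ℝ) + 2)) atTop (𝓝 1) := by
    have h1 : Tendsto (fun n : ℕ => ((n : ℝ) + 2)) atTop atTop :=
      tendsto_atTop_add_const_right _ 2 tendsto_natCast_atTop_atTop
    have h2 : Tendsto (fun n : ℕ => 1 / ((n : ℝ) + 2)) atTop (𝓝 0) := by
      simp only [one_div]; exact h1.inv_tendsto_atTop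
    simpa using tendsto_const_nhds.sub h2
  refine ⟨c, hcD, ?_⟩
  refine le_of_tendsto_of_tendsto' hone hβtend ?_
  intro n
  have hle : 1 / ((ψ n : ℝ) + 2) ≤ 1 / ((n : ℝ) + 2) := by
    apply one_div_le_one_div_of_le
    · positivity
    · have h3 : (n : ℝ) ≤ (ψ n : ℝ) := by exact_mod_cast hψ.le_apply
      linarith
  have h4 : 1 - 1 / ((ψ n : ℝ) + 2) < (1 - ‖z (ψ n)‖ ^ 2) * ‖deriv φ (z (ψ n))‖ := hzgt (ψ n)
  show 1 - 1 / ((n : ℝ) + 2) ≤ (1 - ‖z (ψ n)‖ ^ 2) * ‖deriv φ (z (ψ n))‖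
  linarith


end Stmt4Aux

/-- if `φ` is an analytic self-map of the disk with `φ(0) = 0`, `C_φ` is an
isometry on `HB(1)`, and `φ'` is bounded on the disk, then `φ` is a rotation. -/
theorem stmt4 (φ : ℂ → ℂ) (hφ : IsSelfMap φ) (h0 : φ 0 = 0)
    (hiso : IsIsometryOn 1 φ)
    (hbdd : ∃ M : ℝ, ∀ z ∈ unitDisk, ‖deriv φ z‖ ≤ M) :
    IsRotation φ := by
  obtain ⟨hdiff, hmaps⟩ := hφ
  have hsup := Stmt4Aux.step1 φ h0 hiso
  obtain ⟨c, hcD, hβ⟩ := Stmt4Aux.step2 φ hdiff hbdd hsup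
  exact Stmt4Aux.step3 φ hdiff hmaps h0 hcD hβ
end
end

section
/- If φ is an analytic self-map of the unit disk D with φ(0) = 0, φ univalent, and C_φ is an isometry on the harmonic Bloch space HB(1), then φ is a rotation. -/
open Complex Metric Set Filter
noncomputable section

/-- Möbius transformation of the disk sending `a` to `0`. -/
def mob (a : ℂ) : ℂ → ℂ := fun w => (w - a) / (1 - (starRingEnd ℂ) a * w)

lemma mob_denom_ne {a w : ℂ} (ha : ‖a‖ < 1) (hw : ‖w‖ < 1) :
    (1 - (starRingEnd ℂ) a * w) ≠ 0 := by
  intro h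
  have h1 : (1 : ℂ) = (starRingEnd ℂ) a * w := by linear_combination h
  have := congrArg (fun x : ℂ => ‖x‖) h1
  simp only [norm_one, norm_mul, Complex.norm_conj] at this
  nlinarith [norm_nonneg a, norm_nonneg w]

lemma mob_mem {a w : ℂ} (ha : ‖a‖ < 1) (hw : ‖w‖ < 1) :
    ‖mob a w‖ < 1 := by
  have hne := mob_denom_ne ha hw
  have key : Complex.normSq (1 - (starRingEnd ℂ) a * w) - Complex.normSq (w - a)
      = (1 - Complex.normSq a) * (1 - Complex.normSq w) := by
    simp only [Complex.normSq_apply, Complex.sub_re, Complex.sub_im, Complex.mul_re,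
      Complex.mul_im, Complex.one_re, Complex.one_im, Complex.conj_re, Complex.conj_im]
    ring
  have ha2 : Complex.normSq a < 1 := by rw [← Complex.sq_norm]; nlinarith [norm_nonneg a]
  have hw2 : Complex.normSq w < 1 := by rw [← Complex.sq_norm]; nlinarith [norm_nonneg w]
  have hlt : Complex.normSq (w - a) < Complex.normSq (1 - (starRingEnd ℂ) a * w) := by nlinarith
  rw [mob, norm_div, div_lt_one (norm_pos_iff.mpr hne)]
  have := Complex.sq_norm (w - a)
  have := Complex.sq_norm (1 - (starRingEnd ℂ) a * w)
  nlinarith [norm_nonneg (w - a), norm_nonneg (1 - (starRingEnd ℂ) a * w)]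

lemma mob_hasDerivAt {a w : ℂ} (ha : ‖a‖ < 1) (hw : ‖w‖ < 1) :
    HasDerivAt (mob a) ((1 - (starRingEnd ℂ) a * a) / (1 - (starRingEnd ℂ) a * w) ^ 2) w := by
  have hne := mob_denom_ne ha hw
  have h1 : HasDerivAt (fun w : ℂ => w - a) 1 w := (hasDerivAt_id w).sub_const a
  have h2 : HasDerivAt (fun w : ℂ => 1 - (starRingEnd ℂ) a * w) (-(starRingEnd ℂ) a) w := by
    simpa using ((hasDerivAt_id w).const_mul ((starRingEnd ℂ) a)).const_sub 1
  have := h1.div h2 hne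
  exact this.congr_deriv (by ring)

lemma schwarzPick {φ : ℂ → ℂ} (hd : DifferentiableOn ℂ φ (ball (0:ℂ) 1))
    (hm : MapsTo φ (ball (0:ℂ) 1) (ball (0:ℂ) 1)) {z : ℂ} (hz : z ∈ ball (0:ℂ) 1) :
    (1 - ‖z‖ ^ 2) * ‖deriv φ z‖ ≤ 1 - ‖φ z‖ ^ 2 := by
  have hz1 : ‖z‖ < 1 := by simpa [Complex.norm_def, mem_ball_zero_iff] using hz
  set a := φ z with ha_def
  have ha1 : ‖a‖ < 1 := by
    simpa [mem_ball_zero_iff] using hm hz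
  -- the composed map g = mob a ∘ φ ∘ mob (-z)
  set M : ℂ → ℂ := mob (-z) with hM_def
  set g : ℂ → ℂ := mob a ∘ φ ∘ M with hg_def
  have hz1' : ‖-z‖ < 1 := by simpa using hz1
  have hM0 : M 0 = z := by
    simp [hM_def, mob]
  have hMmem : ∀ w ∈ ball (0:ℂ) 1, M w ∈ ball (0:ℂ) 1 := by
    intro w hw
    simpa [mem_ball_zero_iff] using
      mob_mem hz1' (by simpa [mem_ball_zero_iff] using hw)
  have hφM : ∀ w ∈ ball (0:ℂ) 1, φ (M w) ∈ ball (0:ℂ) 1 := fun w hw => hm (hMmem w hw)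
  have hgm : MapsTo g (ball (0:ℂ) 1) (ball (0:ℂ) 1) := by
    intro w hw
    have := mob_mem ha1 (by simpa [mem_ball_zero_iff] using hφM w hw)
    simpa [hg_def, mem_ball_zero_iff] using this
  have hgd : DifferentiableOn ℂ g (ball (0:ℂ) 1) := by
    intro w hw
    have h1 : DifferentiableAt ℂ M w :=
      (mob_hasDerivAt hz1' (by simpa [mem_ball_zero_iff] using hw)).differentiableAt
    have h2 : DifferentiableAt ℂ φ (M w) :=
      hd.differentiableAt (isOpen_ball.mem_nhds (hMmem w hw))
    have h3 : DifferentiableAt ℂ (mob a) (φ (M w)) :=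
      (mob_hasDerivAt ha1 (by simpa [mem_ball_zero_iff] using hφM w hw)).differentiableAt
    exact ((h3.comp _ h2).comp _ h1).differentiableWithinAt
  have hg0 : g 0 = 0 := by
    simp only [hg_def, Function.comp_apply, hM0, ← ha_def]
    simp [mob]
  -- compute deriv g 0
  have hMd : HasDerivAt M ((1 - (starRingEnd ℂ) (-z) * (-z)) / (1 - (starRingEnd ℂ) (-z) * 0) ^ 2) 0 :=
    mob_hasDerivAt hz1' (by simp)
  have hφd : HasDerivAt φ (deriv φ z) z :=
    (hd.differentiableAt (isOpen_ball.mem_nhds hz)).hasDerivAt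
  have hφd' : HasDerivAt φ (deriv φ z) (M 0) := hM0 ▸ hφd
  have hinner : HasDerivAt (φ ∘ M)
      (deriv φ z * ((1 - (starRingEnd ℂ) (-z) * (-z)) / (1 - (starRingEnd ℂ) (-z) * 0) ^ 2)) 0 :=
    hφd'.comp 0 hMd
  have hNd : HasDerivAt (mob a) ((1 - (starRingEnd ℂ) a * a) / (1 - (starRingEnd ℂ) a * a) ^ 2)
      ((φ ∘ M) 0) := by
    rw [Function.comp_apply, hM0, ← ha_def]
    exact mob_hasDerivAt ha1 ha1
  have hgderiv : HasDerivAt g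
      ((1 - (starRingEnd ℂ) a * a) / (1 - (starRingEnd ℂ) a * a) ^ 2 *
        (deriv φ z * ((1 - (starRingEnd ℂ) (-z) * (-z)) / (1 - (starRingEnd ℂ) (-z) * 0) ^ 2))) 0 :=
    hNd.comp 0 hinner
  have hval : ‖deriv g 0‖ ≤ 1 :=
    Complex.norm_deriv_le_one_of_mapsTo_ball hgd (by rw [hg0]; exact hgm.mono_right ball_subset_closedBall) one_pos
  rw [hgderiv.deriv] at hval
  -- simplify the absolute values
  have haa : (1 - (starRingEnd ℂ) a * a) = ((1 - ‖a‖ ^ 2 : ℝ) : ℂ) := by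
    rw [← Complex.normSq_eq_conj_mul_self, ← Complex.sq_norm]
    push_cast
    ring
  have hzz : (1 - (starRingEnd ℂ) (-z) * (-z)) = ((1 - ‖z‖ ^ 2 : ℝ) : ℂ) := by
    rw [map_neg, neg_mul_neg, ← Complex.normSq_eq_conj_mul_self, ← Complex.sq_norm]
    push_cast
    ring
  have hapos : (0:ℝ) < 1 - ‖a‖ ^ 2 := by nlinarith [norm_nonneg a]
  have hzpos : (0:ℝ) < 1 - ‖z‖ ^ 2 := by nlinarith [norm_nonneg z]
  rw [norm_mul, norm_mul, norm_div, norm_div, haa, hzz] at hval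
  simp only [norm_pow, Complex.norm_real, Real.norm_eq_abs, norm_one, mul_zero, sub_zero] at hval
  rw [abs_of_pos hapos, abs_of_pos hzpos] at hval
  have h2 : (1 - ‖a‖ ^ 2) / (1 - ‖a‖ ^ 2) ^ 2 *
      (‖deriv φ z‖ * ((1 - ‖z‖ ^ 2) / 1 ^ 2))
      = (1 - ‖z‖ ^ 2) * ‖deriv φ z‖ / (1 - ‖a‖ ^ 2) := by
    field_simp
  rw [h2, div_le_one hapos] at hval
  exact hval

/-- if `φ` is a univalent analytic self-map of the disk with `φ(0) = 0` and `C_φ`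
is an isometry on `HB(1)`, then `φ` is a rotation. -/
theorem stmt5 (φ : ℂ → ℂ) (hφ : IsSelfMap φ) (h0 : φ 0 = 0)
    (huniv : InjOn φ unitDisk) (hiso : IsIsometryOn 1 φ) :
    IsRotation φ := by
  obtain ⟨hdφ, hmφ⟩ := hφ
  have hmem : ∀ {w : ℂ}, w ∈ unitDisk ↔ ‖w‖ < 1 := by
    intro w; simp [unitDisk, mem_ball_zero_iff, Complex.norm_def]
  have h0mem : (0:ℂ) ∈ unitDisk := by rw [hmem]; simp
  -- the Bloch set of the identity function
  have hid : ∀ z : ℂ, deriv (fun w : ℂ => w) z = 1 := fun z => deriv_id z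
  have hzero : ∀ z : ℂ, deriv (fun _ : ℂ => (0:ℂ)) z = 0 := fun z => deriv_const z 0
  have hset_id : hbSet 1 (fun w => w) (fun _ => 0) =
      (fun z => 1 - ‖z‖ ^ 2) '' unitDisk := by
    unfold hbSet
    apply image_congr
    intro z _
    rw [hid, hzero]
    simp [Real.rpow_one]
  have hbdd_id : BddAbove (hbSet 1 (fun w => w) (fun _ => 0)) := by
    rw [hset_id]
    refine ⟨1, ?_⟩
    rintro x ⟨z, _, rfl⟩
    show 1 - ‖z‖ ^ 2 ≤ 1
    nlinarith [norm_nonneg z, sq_nonneg (‖z‖)]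
  have hsemi_id : hbSemi 1 (fun w => w) (fun _ => 0) = 1 := by
    unfold hbSemi
    rw [hset_id]
    apply IsGreatest.csSup_eq
    constructor
    · exact ⟨0, h0mem, by simp⟩
    · rintro x ⟨z, _, rfl⟩
      show 1 - ‖z‖ ^ 2 ≤ 1
      nlinarith [norm_nonneg z, sq_nonneg (‖z‖)]
  have hHB : IsHB 1 (fun w => w) (fun _ => 0) :=
    ⟨differentiableOn_id, differentiableOn_const 0, hbdd_id⟩
  have hnorm_id : hbNorm 1 (fun w => w) (fun _ => 0) = 1 := by
    unfold hbNorm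
    rw [hsemi_id]
    simp
  -- apply the isometry hypothesis
  have hiso1 := hiso (fun w => w) (fun _ => 0) hHB
  rw [hnorm_id] at hiso1
  -- simplify the left side
  have hcomp1 : ((fun w : ℂ => w) ∘ φ) = φ := rfl
  have hcomp2 : ((fun _ : ℂ => (0:ℂ)) ∘ φ) = (fun _ : ℂ => (0:ℂ)) := rfl
  rw [hcomp1, hcomp2] at hiso1
  set u : ℂ → ℝ := fun z => (1 - ‖z‖ ^ 2) * ‖deriv φ z‖ with hu_def
  have hset_φ : hbSet 1 φ (fun _ => 0) = u '' unitDisk := by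
    unfold hbSet
    apply image_congr
    intro z _
    rw [hzero]
    simp [hu_def, Real.rpow_one]
  have hsup : sSup (u '' unitDisk) = 1 := by
    have : hbNorm 1 φ (fun _ => 0) = ‖φ 0‖ + sSup (u '' unitDisk) := by
      unfold hbNorm hbSemi
      rw [hset_φ]
      simp
    rw [this, h0] at hiso1
    simpa using hiso1
  -- Schwarz–Pick bound
  have hSP : ∀ z ∈ unitDisk, u z ≤ 1 - ‖φ z‖ ^ 2 := fun z hz =>
    schwarzPick hdφ hmφ hz
  have hune : (u '' unitDisk).Nonempty := ⟨u 0, 0, h0mem, rfl⟩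
  -- continuity of the inverse at 0 via the open mapping theorem
  have hopen : IsOpen unitDisk := isOpen_ball
  have han : AnalyticOnNhd ℂ φ unitDisk := hdφ.analyticOnNhd hopen
  have hinv : ∀ ε > 0, ∃ δ > 0, ∀ w ∈ unitDisk, ‖φ w‖ < δ → ‖w‖ < ε := by
    intro ε hε
    have hVopen : IsOpen (ball (0:ℂ) ε ∩ unitDisk) := isOpen_ball.inter hopen
    have h0V : (0:ℂ) ∈ ball (0:ℂ) ε ∩ unitDisk := ⟨by simpa using hε, h0mem⟩
    have himopen : IsOpen (φ '' (ball (0:ℂ) ε ∩ unitDisk)) := by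
      rcases han.is_constant_or_isOpen (convex_ball 0 1).isPreconnected with hconst | hopen'
      · exfalso
        obtain ⟨v, hv⟩ := hconst
        have h1 : φ 0 = v := hv 0 h0mem
        have h2 : φ (1/2 : ℂ) = v := hv (1/2) (by rw [hmem]; norm_num)
        have : (0:ℂ) = (1/2 : ℂ) := huniv h0mem (by rw [hmem]; norm_num) (by rw [h1, h2])
        norm_num at this
      · exact hopen' _ inter_subset_right hVopen
    have h0im : φ 0 ∈ φ '' (ball (0:ℂ) ε ∩ unitDisk) := mem_image_of_mem φ h0V
    rw [h0] at h0im
    obtain ⟨δ, hδpos, hδ⟩ := Metric.isOpen_iff.1 himopen 0 h0im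
    refine ⟨δ, hδpos, fun w hw hww => ?_⟩
    have : φ w ∈ φ '' (ball (0:ℂ) ε ∩ unitDisk) := hδ (by simpa [mem_ball_zero_iff] using hww)
    obtain ⟨v, ⟨hv1, hv2⟩, hv3⟩ := this
    have : v = w := huniv hv2 hw hv3
    rw [← this]
    simpa [mem_ball_zero_iff] using hv1
  -- continuity of u at 0
  have hderiv_cont : ContinuousAt (fun w => deriv φ w) 0 := by
    have : AnalyticOnNhd ℂ (deriv φ) unitDisk := han.deriv
    exact (this 0 h0mem).continuousAt
  have hu_cont : ContinuousAt u 0 := by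
    apply ContinuousAt.mul
    · exact (continuousAt_const.sub ((continuous_norm.continuousAt).pow 2))
    · exact continuous_norm.continuousAt.comp hderiv_cont
  have hu0 : u 0 = ‖deriv φ 0‖ := by simp [hu_def]
  -- |φ'(0)| ≥ 1
  have hge : ∀ ε' > (0:ℝ), 1 - ε' ≤ ‖deriv φ 0‖ := by
    intro ε' hε'
    obtain ⟨ε, hεpos, hεball⟩ := Metric.continuousAt_iff.1 hu_cont (ε'/2) (by linarith)
    obtain ⟨δ, hδpos, hδ⟩ := hinv ε hεpos
    set η : ℝ := min (δ^2) (ε'/2) with hη_def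
    have hηpos : 0 < η := lt_min (by positivity) (by linarith)
    have hlt : 1 - η < sSup (u '' unitDisk) := by rw [hsup]; linarith
    obtain ⟨x, ⟨z, hz, rfl⟩, hx⟩ := exists_lt_of_lt_csSup hune hlt
    -- u z > 1 - η
    have hφz : ‖φ z‖ ^ 2 < δ ^ 2 := by
      have h1 := hSP z hz
      have h2 : η ≤ δ^2 := min_le_left _ _
      nlinarith
    have hφz' : ‖φ z‖ < δ := by
      have := norm_nonneg (φ z)
      nlinarith
    have hzsmall : ‖z‖ < ε := hδ z hz hφz'
    have hdist : dist z (0:ℂ) < ε := by simpa [Complex.dist_eq] using hzsmall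
    have := hεball hdist
    rw [Real.dist_eq, hu0] at this
    have h2 : η ≤ ε'/2 := min_le_right _ _
    have habs := abs_lt.1 this
    linarith
  have hge1 : 1 ≤ ‖deriv φ 0‖ := by
    by_contra hlt
    push_neg at hlt
    have := hge ((1 - ‖deriv φ 0‖)/2) (by linarith)
    linarith
  -- Schwarz lemma equality case
  have hmφ' : MapsTo φ (ball (0:ℂ) 1) (ball (φ 0) 1) := by rw [h0]; exact hmφ
  have hle1 : ‖deriv φ 0‖ ≤ 1 :=
    Complex.norm_deriv_le_one_of_mapsTo_ball hdφ (by rw [h0]; exact hmφ.mono_right ball_subset_closedBall) one_pos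
  have heq1 : ‖deriv φ 0‖ = 1 := le_antisymm hle1 hge1
  have hds : ‖dslope φ 0 0‖ = 1/1 := by
    rw [dslope_same]
    simpa using heq1
  have haffine := Complex.affine_of_mapsTo_ball_of_exists_norm_dslope_eq_div
    (E := ℂ) hdφ (hmφ'.mono_right ball_subset_closedBall) (mem_ball_self one_pos) hds
  refine ⟨deriv φ 0, heq1, fun z hz => ?_⟩
  have := haffine hz
  simp only [h0, dslope_same, zero_add, sub_zero, smul_eq_mul] at this
  rw [this, mul_comm]
end
end

section
/- If C_φ is an isometry of the harmonic Bloch space HB(1) and φ fixes the origin but is not a rotation, then for the disk automorphism φ_a(z)=(a-z)/(1-āz) one has sup_{z∈D} τ_φ(z)(1 - |φ_a(φ(z))|²) = 1 for every a ∈ D, where τ_φ(z) = (1-|z|²)|φ'(z)|/(1-|φ(z)|²). -/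
open Complex Metric Set Filter
noncomputable section

lemma my_mem_unitDisk {z : ℂ} : z ∈ unitDisk ↔ ‖z‖ < 1 := by
  simp [unitDisk, mem_ball_zero_iff]

lemma my_den_ne {a z : ℂ} (ha : ‖a‖ < 1) (hz : ‖z‖ < 1) :
    1 - (starRingEnd ℂ) a * z ≠ 0 := by
  intro h
  have h1 : (1 : ℂ) = (starRingEnd ℂ) a * z := by linear_combination h
  have := congrArg (‖·‖) h1
  simp [norm_mul] at this
  nlinarith [norm_nonneg a, norm_nonneg z]

lemma my_phia_diff {a z : ℂ} (ha : ‖a‖ < 1) (hz : ‖z‖ < 1) :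
    DifferentiableAt ℂ (fun w => (a - w) / (1 - (starRingEnd ℂ) a * w)) z := by
  exact DifferentiableAt.div ((differentiableAt_const a).sub differentiableAt_fun_id)
    ((differentiableAt_const 1).sub ((differentiableAt_const _).mul differentiableAt_fun_id))
    (my_den_ne ha hz)

lemma my_deriv_phia {a z : ℂ} (ha : ‖a‖ < 1) (hz : ‖z‖ < 1) :
    deriv (fun w => (a - w) / (1 - (starRingEnd ℂ) a * w)) z
      = ((Complex.normSq a : ℂ) - 1) / (1 - (starRingEnd ℂ) a * z) ^ 2 := by
  have hne := my_den_ne ha hz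
  rw [deriv_fun_div (c := fun w => a - w) (d := fun w => 1 - (starRingEnd ℂ) a * w) ((differentiableAt_const a).sub differentiableAt_fun_id)
    ((differentiableAt_const 1).sub ((differentiableAt_const _).mul differentiableAt_fun_id)) hne]
  have e1 : deriv (fun w : ℂ => a - w) z = -1 := by rw [deriv_const_sub, deriv_id'']
  have e2 : deriv (fun w : ℂ => 1 - (starRingEnd ℂ) a * w) z = -((starRingEnd ℂ) a) := by
    rw [deriv_const_sub, deriv_const_mul _ differentiableAt_fun_id, deriv_id'']; ring
  rw [e1, e2]
  have : ((Complex.normSq a : ℂ)) = (starRingEnd ℂ) a * a := by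
    rw [mul_comm, Complex.mul_conj]
  rw [this]
  field_simp
  ring

lemma my_key (a z : ℂ) :
    Complex.normSq (1 - (starRingEnd ℂ) a * z) - Complex.normSq (a - z)
      = (1 - Complex.normSq a) * (1 - Complex.normSq z) := by
  simp [Complex.normSq_apply, Complex.mul_re, Complex.mul_im]
  ring

lemma my_one_sub_abs_phia {a z : ℂ} (ha : ‖a‖ < 1) (hz : ‖z‖ < 1) :
    1 - ‖(a - z) / (1 - (starRingEnd ℂ) a * z)‖ ^ 2
      = (1 - Complex.normSq a) * (1 - Complex.normSq z)
          / Complex.normSq (1 - (starRingEnd ℂ) a * z) := by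
  have hne := my_den_ne ha hz
  have hpos : 0 < Complex.normSq (1 - (starRingEnd ℂ) a * z) := by
    simpa [Complex.normSq_pos] using hne
  rw [norm_div, div_pow, Complex.sq_norm, Complex.sq_norm, eq_div_iff (ne_of_gt hpos),
    sub_mul, div_mul_cancel₀ _ (ne_of_gt hpos), one_mul, ← my_key a z]

lemma my_abs_deriv_phia {a z : ℂ} (ha : ‖a‖ < 1) (hz : ‖z‖ < 1) :
    ‖deriv (fun w => (a - w) / (1 - (starRingEnd ℂ) a * w)) z‖
      = (1 - Complex.normSq a) / Complex.normSq (1 - (starRingEnd ℂ) a * z) := by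
  have hne := my_den_ne ha hz
  have hnsa : Complex.normSq a < 1 := by
    rw [← Complex.sq_norm]; nlinarith [norm_nonneg a]
  rw [my_deriv_phia ha hz, norm_div, norm_pow]
  have : ((Complex.normSq a : ℂ) - 1) = ((Complex.normSq a - 1 : ℝ) : ℂ) := by push_cast; ring
  rw [this, Complex.norm_real, Real.norm_eq_abs, abs_of_neg (by linarith)]
  simp only [Complex.normSq_eq_norm_sq]
  ring

lemma my_identity {a z : ℂ} (ha : ‖a‖ < 1) (hz : ‖z‖ < 1) :
    (1 - ‖z‖ ^ 2) *
        ‖deriv (fun w => (a - w) / (1 - (starRingEnd ℂ) a * w)) z‖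
      = 1 - ‖(a - z) / (1 - (starRingEnd ℂ) a * z)‖ ^ 2 := by
  rw [my_abs_deriv_phia ha hz, my_one_sub_abs_phia ha hz, Complex.sq_norm]
  ring

lemma my_sSup_mul (c : ℝ) (hc : 0 ≤ c) (S : Set ℝ) :
    sSup ((fun x => c * x) '' S) = c * sSup S := by
  have := Real.sSup_smul_of_nonneg hc S
  simpa [← Set.image_smul, smul_eq_mul] using this

/-- if `C_φ` is an isometry of `HB(1)`, `φ(0) = 0` and `φ` is not a rotation, then
for every `a ∈ D`, `sup_{z∈D} τ_φ(z) (1 - |φ_a(φ(z))|²) = 1`, where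
`φ_a(w) = (a-w)/(1-āw)`. -/
theorem stmt7 (φ : ℂ → ℂ) (hφ : IsSelfMap φ) (h0 : φ 0 = 0) (hrot : ¬ IsRotation φ)
    (hiso : IsIsometryOn 1 φ) :
    ∀ a ∈ unitDisk,
      sSup ((fun z => tauPhi φ z *
        (1 - ‖(a - φ z) / (1 - (starRingEnd ℂ) a * φ z)‖ ^ 2)) '' unitDisk) = 1 := by

  obtain ⟨hφd, hφm⟩ := hφ
  have hopen : IsOpen unitDisk := isOpen_ball
  have hφat : ∀ z ∈ unitDisk, DifferentiableAt ℂ φ z := fun z hz =>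
    hφd.differentiableAt (hopen.mem_nhds hz)
  have h0D : (0 : ℂ) ∈ unitDisk := by rw [my_mem_unitDisk]; simp
  intro a ha
  have haD : ‖a‖ < 1 := my_mem_unitDisk.mp ha
  have hφabs : ∀ z ∈ unitDisk, ‖φ z‖ < 1 := fun z hz =>
    my_mem_unitDisk.mp (hφm hz)
  by_cases ha0 : a = 0
  · -- case a = 0 : use test function f = z
    subst ha0
    -- target set equals the Bloch set of φ
    have hTeq : (fun z => tauPhi φ z *
          (1 - ‖(0 - φ z) / (1 - (starRingEnd ℂ) 0 * φ z)‖ ^ 2)) '' unitDisk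
        = (fun z => (1 - ‖z‖ ^ 2) * ‖deriv φ z‖) '' unitDisk := by
      apply Set.image_congr
      intro z hz
      have hw : ‖φ z‖ < 1 := hφabs z hz
      have hne : (1 : ℝ) - ‖φ z‖ ^ 2 ≠ 0 := by nlinarith [norm_nonneg (φ z)]
      simp only [map_zero, zero_mul, sub_zero, zero_sub, div_one, map_neg_eq_map, norm_neg]
      rw [tauPhi, div_mul_cancel₀ _ hne]
    rw [hTeq]
    -- apply the isometry to h = id, g = 0
    have hHB : IsHB 1 (fun z : ℂ => z) (fun _ : ℂ => (0 : ℂ)) := by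
      refine ⟨differentiableOn_id, differentiableOn_const 0, ⟨1, ?_⟩⟩
      rintro x ⟨z, hz, rfl⟩
      have hz1 := my_mem_unitDisk.mp hz
      simp only [deriv_id'', deriv_const, map_one, map_zero, norm_one, norm_zero, add_zero, mul_one,
        Real.rpow_one]
      nlinarith [norm_nonneg z]
    have hisoeq := hiso _ _ hHB
    -- compute the right side
    have hset1 : hbSet 1 (fun z : ℂ => z) (fun _ : ℂ => (0 : ℂ))
        = (fun z : ℂ => 1 - ‖z‖ ^ 2) '' unitDisk := by
      apply Set.image_congr
      intro z hz
      simp [Real.rpow_one]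
    have hsup1 : hbSemi 1 (fun z : ℂ => z) (fun _ : ℂ => (0 : ℂ)) = 1 := by
      rw [hbSemi, hset1]
      apply IsGreatest.csSup_eq
      constructor
      · exact ⟨0, h0D, by simp⟩
      · rintro x ⟨z, hz, rfl⟩
        simp only []
        nlinarith [sq_nonneg (‖z‖)]
    have hset2 : hbSet 1 ((fun z : ℂ => z) ∘ φ) ((fun _ : ℂ => (0 : ℂ)) ∘ φ)
        = (fun z => (1 - ‖z‖ ^ 2) * ‖deriv φ z‖) '' unitDisk := by
      apply Set.image_congr
      intro z hz
      have : (fun z : ℂ => z) ∘ φ = φ := rfl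
      simp [this, Function.comp_def, Real.rpow_one]
    rw [hbNorm, hbNorm, hsup1, hbSemi, hset2] at hisoeq
    have : ((fun z : ℂ => z) ∘ φ) 0 = 0 := h0
    rw [this] at hisoeq
    simpa using hisoeq
  · -- case a ≠ 0 : use test function f = ā φ_a + a conj(φ_a)
    have habs : 0 < ‖a‖ := norm_pos_iff.mpr ha0
    set h : ℂ → ℂ := fun z => (starRingEnd ℂ) a * ((a - z) / (1 - (starRingEnd ℂ) a * z))
      with hdef
    have hdiff : ∀ z ∈ unitDisk, DifferentiableAt ℂ h z := fun z hz =>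
      (differentiableAt_const _).mul (my_phia_diff haD (my_mem_unitDisk.mp hz))
    have hderiv : ∀ z, ‖z‖ < 1 → ‖deriv h z‖
        = ‖a‖ *
          ‖deriv (fun w => (a - w) / (1 - (starRingEnd ℂ) a * w)) z‖ := by
      intro z hz
      rw [hdef]
      rw [deriv_const_mul _ (my_phia_diff haD hz), norm_mul, Complex.norm_conj]
    -- the Bloch set of the test function
    have hset1 : hbSet 1 h h
        = (fun z : ℂ => 2 * ‖a‖ *
            (1 - ‖(a - z) / (1 - (starRingEnd ℂ) a * z)‖ ^ 2)) '' unitDisk := by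
      apply Set.image_congr
      intro z hz
      have hz1 := my_mem_unitDisk.mp hz
      rw [Real.rpow_one, hderiv z hz1, ← my_identity haD hz1]
      ring
    have hHB : IsHB 1 h h := by
      refine ⟨fun z hz => (hdiff z hz).differentiableWithinAt,
        fun z hz => (hdiff z hz).differentiableWithinAt, ?_⟩
      rw [hset1]
      refine ⟨2 * ‖a‖, ?_⟩
      rintro x ⟨z, hz, rfl⟩
      have := norm_nonneg ((a - z) / (1 - (starRingEnd ℂ) a * z))
      nlinarith [sq_nonneg (‖(a - z) / (1 - (starRingEnd ℂ) a * z)‖)]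
    have hsup1 : hbSemi 1 h h = 2 * ‖a‖ := by
      rw [hbSemi, hset1]
      apply IsGreatest.csSup_eq
      constructor
      · exact ⟨a, ha, by simp⟩
      · rintro x ⟨z, hz, rfl⟩
        nlinarith [sq_nonneg (‖(a - z) / (1 - (starRingEnd ℂ) a * z)‖)]
    have hval0 : h 0 = (Complex.normSq a : ℂ) := by
      rw [hdef]
      simp [mul_comm, Complex.mul_conj]
    -- Bloch set of composition
    have hset2 : hbSet 1 (h ∘ φ) (h ∘ φ)
        = (fun x => 2 * ‖a‖ * x) ''
          ((fun z => tauPhi φ z *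
            (1 - ‖(a - φ z) / (1 - (starRingEnd ℂ) a * φ z)‖ ^ 2)) '' unitDisk) := by
      rw [Set.image_image]
      apply Set.image_congr
      intro z hz
      have hz1 := my_mem_unitDisk.mp hz
      have hw : ‖φ z‖ < 1 := hφabs z hz
      have hwne : (1 : ℝ) - ‖φ z‖ ^ 2 ≠ 0 := by
        nlinarith [norm_nonneg (φ z)]
      have hcomp : deriv (h ∘ φ) z = deriv h (φ z) * deriv φ z :=
        deriv_comp z (hdiff (φ z) (hφm hz)) (hφat z hz)
      rw [Real.rpow_one, hcomp, norm_mul, hderiv (φ z) hw, tauPhi,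
        ← my_identity haD hw]
      rw [← mul_assoc ((1 - ‖z‖ ^ 2) * ‖deriv φ z‖ / (1 - ‖φ z‖ ^ 2)), div_mul_cancel₀ _ hwne]
      ring
    have hisoeq := hiso h h hHB
    rw [hbNorm, hbNorm, hsup1, hbSemi, hset2, my_sSup_mul _ (by positivity)] at hisoeq
    have hc0 : (h ∘ φ) 0 = (Complex.normSq a : ℂ) := by
      simp only [Function.comp_apply, h0, hval0]
    rw [hc0, hval0] at hisoeq
    have h2 := add_left_cancel hisoeq
    exact mul_left_cancel₀ (a := 2 * ‖a‖) (by positivity)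
      (by rw [mul_one]; exact h2)
end
end

section
/- If C_φ is an isometry on the harmonic α-Bloch space HB(α) for some α > 0, then φ(0) = 0 and sup_{z∈D} (1-|z|²)^α |φ'(z)| = 1. -/
open Complex Metric Set Filter Pointwise
noncomputable section

lemma zero_mem_unitDisk : (0 : ℂ) ∈ unitDisk := mem_ball_self one_pos

lemma abs_lt_one_of_mem {z : ℂ} (hz : z ∈ unitDisk) : ‖z‖ < 1 := by
  simpa [unitDisk] using mem_ball_zero_iff.1 hz

/-- sup of `(1-|z|²)^α * c` over the disk is `c`. -/
lemma supconst (α : ℝ) (hα : 0 < α) (c : ℝ) (hc : 0 ≤ c) :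
    IsGreatest ((fun z => (1 - ‖z‖ ^ 2) ^ α * c) '' unitDisk) c := by
  constructor
  · refine ⟨0, zero_mem_unitDisk, ?_⟩
    simp [Real.one_rpow]
  · rintro y ⟨z, hz, rfl⟩
    have h1 : ‖z‖ ^ 2 ≤ 1 := by
      have := abs_lt_one_of_mem hz
      nlinarith [norm_nonneg z]
    have h0 : (0:ℝ) ≤ 1 - ‖z‖ ^ 2 := by linarith
    have h2 : 1 - ‖z‖ ^ 2 ≤ 1 := by nlinarith [sq_nonneg (‖z‖)]
    calc (1 - ‖z‖ ^ 2) ^ α * c ≤ 1 * c := by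
          exact mul_le_mul_of_nonneg_right (Real.rpow_le_one h0 h2 hα.le) hc
      _ = c := one_mul c

/-- if `C_φ` is an isometry on `HB(α)` for some `α > 0`, then `φ(0) = 0` and
`sup_{z∈D}(1-|z|²)^α |φ'(z)| = 1`. -/
theorem stmt8 (α : ℝ) (hα : 0 < α) (φ : ℂ → ℂ) (hφ : IsSelfMap φ)
    (hiso : IsIsometryOn α φ) :
    φ 0 = 0 ∧
      sSup ((fun z => (1 - ‖z‖ ^ 2) ^ α * ‖deriv φ z‖) '' unitDisk)
        = 1 := by
  obtain ⟨hdiff, hmap⟩ := hφ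
  set a := φ 0 with ha
  have haabs : ‖a‖ < 1 := abs_lt_one_of_mem (hmap zero_mem_unitDisk)
  set P : ℂ → ℝ := fun z => (1 - ‖z‖ ^ 2) ^ α * ‖deriv φ z‖ with hP
  set S : ℝ := sSup (P '' unitDisk) with hS
  -- scaling lemma
  have hscale : ∀ c : ℝ, 0 ≤ c →
      sSup ((fun z => c * P z) '' unitDisk) = c * S := by
    intro c hc
    have him : (fun z => c * P z) '' unitDisk = c • (P '' unitDisk) := by
      rw [← Set.image_smul, ← Set.image_comp]
      rfl
    rw [him, Real.sSup_smul_of_nonneg hc, smul_eq_mul]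
  -- Test function 1 : L(z) = z + conj z, i.e. h = g = id
  have hsetid : hbSet α id id = (fun z => (1 - ‖z‖ ^ 2) ^ α * 2) '' unitDisk := by
    unfold hbSet
    refine Set.image_congr fun z _ => ?_
    norm_num
  have hgid := supconst α hα 2 (by norm_num)
  have hHBid : IsHB α id id := by
    refine ⟨differentiableOn_id, differentiableOn_id, ?_⟩
    rw [hsetid]; exact ⟨2, hgid.2⟩
  have hsetφ : hbSet α φ φ = (fun z => 2 * P z) '' unitDisk := by
    unfold hbSet
    refine Set.image_congr fun z _ => ?_
    simp only [hP]; ring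
  have E1' := hiso id id hHBid
  simp only [Function.id_comp] at E1'
  rw [hbNorm, hbNorm, hbSemi, hbSemi, hsetφ, hsetid, hscale 2 (by norm_num),
    hgid.csSup_eq] at E1'
  simp only [id] at E1'
  have hconj0 : ‖(0:ℂ) + (starRingEnd ℂ) 0‖ = 0 := by simp
  rw [hconj0] at E1'
  -- E1' : ‖φ 0 + conj (φ 0)‖ + 2 * S = 0 + 2
  have habsre : ‖a + (starRingEnd ℂ) a‖ = 2 * |a.re| := by
    rw [Complex.add_conj, Complex.norm_real, Real.norm_eq_abs, abs_mul]
    norm_num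
  have hre_lt : |a.re| < 1 := lt_of_le_of_lt (Complex.abs_re_le_norm a) haabs
  have E1 : 2 * |a.re| + 2 * S = 2 := by rw [← habsre]; linarith [E1']
  -- S bounds
  have hSle : S ≤ 1 := by linarith [abs_nonneg a.re]
  -- Test function 2 : f_a
  set h1 : ℂ → ℂ := fun z => 1 - (starRingEnd ℂ) a * z with hh1
  set g1 : ℂ → ℂ := fun z => -((starRingEnd ℂ) a * z) with hg1
  have Hh1 : ∀ z, HasDerivAt h1 (-((starRingEnd ℂ) a)) z := by
    intro z
    simpa using ((hasDerivAt_id z).const_mul ((starRingEnd ℂ) a)).const_sub 1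
  have Hg1 : ∀ z, HasDerivAt g1 (-((starRingEnd ℂ) a)) z := by
    intro z
    have := ((hasDerivAt_id z).const_mul ((starRingEnd ℂ) a)).neg
    simp only [mul_one] at this
    exact this
  have habsneg : ‖-((starRingEnd ℂ) a)‖ = ‖a‖ := by
    simp [Complex.norm_conj]
  have hset1 : hbSet α h1 g1
      = (fun z => (1 - ‖z‖ ^ 2) ^ α * (2 * ‖a‖)) '' unitDisk := by
    unfold hbSet
    refine Set.image_congr fun z _ => ?_
    rw [(Hh1 z).deriv, (Hg1 z).deriv, habsneg]
    ring
  have hca : (0:ℝ) ≤ 2 * ‖a‖ := by positivity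
  have hg1g := supconst α hα (2 * ‖a‖) hca
  have hHB1 : IsHB α h1 g1 := by
    refine ⟨fun z _ => (Hh1 z).differentiableAt.differentiableWithinAt,
      fun z _ => (Hg1 z).differentiableAt.differentiableWithinAt, ?_⟩
    rw [hset1]; exact ⟨_, hg1g.2⟩
  -- derivatives of the compositions on the disk
  have hderφ : ∀ z ∈ unitDisk, HasDerivAt φ (deriv φ z) z := by
    intro z hz
    have : DifferentiableAt ℂ φ z :=
      hdiff.differentiableAt (by rw [unitDisk] at hz ⊢; exact isOpen_ball.mem_nhds hz)
    exact this.hasDerivAt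
  have hset2 : hbSet α (h1 ∘ φ) (g1 ∘ φ)
      = (fun z => (2 * ‖a‖) * P z) '' unitDisk := by
    unfold hbSet
    apply Set.image_congr
    intro z hz
    have d1 : deriv (h1 ∘ φ) z = -((starRingEnd ℂ) a) * deriv φ z :=
      (HasDerivAt.comp z (Hh1 (φ z)) (hderφ z hz)).deriv
    have d2 : deriv (g1 ∘ φ) z = -((starRingEnd ℂ) a) * deriv φ z :=
      (HasDerivAt.comp z (Hg1 (φ z)) (hderφ z hz)).deriv
    rw [d1, d2, norm_mul, habsneg]
    simp only [hP]
    ring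
  have E2' := hiso h1 g1 hHB1
  rw [hbNorm, hbNorm, hbSemi, hbSemi, hset2, hset1, hscale _ hca,
    hg1g.csSup_eq] at E2'
  -- compute the value terms
  have hval1 : ‖h1 0 + (starRingEnd ℂ) (g1 0)‖ = 1 := by
    simp [hh1, hg1]
  have hval2 : ‖(h1 ∘ φ) 0 + (starRingEnd ℂ) ((g1 ∘ φ) 0)‖
      = |1 - 2 * ‖a‖ ^ 2| := by
    have : (h1 ∘ φ) 0 + (starRingEnd ℂ) ((g1 ∘ φ) 0)
        = ((1 - 2 * ‖a‖ ^ 2 : ℝ) : ℂ) := by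
      simp only [Function.comp_apply, hh1, hg1, ← ha, map_neg, map_mul,
        Complex.conj_conj]
      rw [Complex.mul_conj, ← Complex.normSq_eq_conj_mul_self, Complex.normSq_eq_norm_sq]
      push_cast
      ring
    rw [this, Complex.norm_real, Real.norm_eq_abs]
  rw [hval1, hval2] at E2'
  -- E2' : |1 - 2|a|²| + 2|a| S = 1 + 2|a|
  set t : ℝ := ‖a‖ with ht
  have ht0 : 0 ≤ t := norm_nonneg a
  have hge : |1 - 2 * t ^ 2| ≥ 1 := by nlinarith
  have ht_eq : t = 0 := by
    rcases abs_cases (1 - 2 * t ^ 2) with ⟨he, _⟩ | ⟨he, _⟩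
    · nlinarith
    · nlinarith
  have ha0 : a = 0 := by
    rwa [← norm_eq_zero, ← ht]
  refine ⟨ha0, ?_⟩
  have hre0 : |a.re| = 0 := by rw [ha0]; simp
  rw [hre0] at E1
  linarith
end
end
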